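/- There exist positive constants a and b such that for all sufficiently large n, any partition of E(K_n) into C₄-free bipartite graphs requires at least a·√n parts, and there exists such a partition with at most b·√n·log n parts. -/

import Mathlib

open SimpleGraph

/-- The graph `2K₂`: two disjoint edges, on vertices {0,1} and {2,3}. -/
def twoK2 : SimpleGraph (Fin 4) where
  Adj i j := i ≠ j ∧ i.val / 2 = j.val / 2
  symm := by constructor; decide
  loopless := by constructor; decide

/-- The path `P₃` on 3 vertices. -/
def pathP3 : SimpleGraph (Fin 3) where
  Adj i j := i.val + 1 = j.val ∨ j.val + 1 = i.val
  symm := by constructor; decide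
  loopless := by constructor; decide

/-- The path `P₄` on 4 vertices. -/
def pathP4 : SimpleGraph (Fin 4) where
  Adj i j := i.val + 1 = j.val ∨ j.val + 1 = i.val
  symm := by constructor; decide
  loopless := by constructor; decide

/-- The cycle `C₄` on 4 vertices. -/
def cycleC4 : SimpleGraph (Fin 4) where
  Adj i j := (i.val + 1) % 4 = j.val ∨ (j.val + 1) % 4 = i.val
  symm := by constructor; decide
  loopless := by constructor; decide

/-- The star `S₄ = K_{1,3}` on 4 vertices, with center 0. -/
def starS4 : SimpleGraph (Fin 4) where
  Adj i j := i ≠ j ∧ (i = 0 ∨ j = 0)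
  symm := by constructor; decide
  loopless := by constructor; decide

/-- The graph `K₂ + K₁`: an edge plus an isolated vertex. -/
def K2plusK1 : SimpleGraph (Fin 3) where
  Adj i j := (i = 0 ∧ j = 1) ∨ (i = 1 ∧ j = 0)
  symm := by constructor; decide
  loopless := by constructor; decide

/-- `G` avoids `H`: `H` is not an induced subgraph of `G` restricted to its
support (the vertices incident to an edge), matching the convention that
template graphs have no isolated vertices. -/
def Avoids {α β : Type} (G : SimpleGraph α) (H : SimpleGraph β) : Prop :=
  IsEmpty (H ↪g (G.induce G.support))

/-- `P` is a partition of the edge set of the complete graph `K_n` into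
bipartite graphs: every template is 2-colorable, and every edge of `K_n`
belongs to exactly one template. -/
def IsBipartitePartition (n k : ℕ) (P : Fin k → SimpleGraph (Fin n)) : Prop :=
  (∀ i, (P i).Colorable 2) ∧
    ∀ e ∈ (⊤ : SimpleGraph (Fin n)).edgeSet, ∃! i, e ∈ (P i).edgeSet


section helpers

-- U1
-- U2
theorem div_eq_of_xor_lt {a b k : ℕ} (h : a ^^^ b < 2 ^ k) : a / 2 ^ k = b / 2 ^ k := by
  rw [← Nat.shiftRight_eq_div_pow, ← Nat.shiftRight_eq_div_pow]
  apply Nat.eq_of_testBit_eq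
  intro j
  rw [Nat.testBit_shiftRight, Nat.testBit_shiftRight]
  by_contra hne
  have : (a ^^^ b).testBit (k + j) = true := by
    rw [Nat.testBit_xor]
    cases h1 : a.testBit (k+j) <;> cases h2 : b.testBit (k+j) <;> simp_all
  have := Nat.ge_two_pow_of_testBit this
  have : 2 ^ k ≤ 2 ^ (k + j) := Nat.pow_le_pow_right (by norm_num) (by omega)
  omega

-- U3
theorem eq_of_parts {a b i : ℕ} (hhi : a / 2 ^ (i+1) = b / 2 ^ (i+1))
    (hbit : a.testBit i = b.testBit i) (hlo : a % 2 ^ i = b % 2 ^ i) : a = b := by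
  apply Nat.eq_of_testBit_eq
  intro j
  rcases lt_trichotomy j i with hj | hj | hj
  · have := congrArg (fun x => Nat.testBit x j) hlo
    simpa [Nat.testBit_mod_two_pow, hj] using this
  · subst hj; exact hbit
  · have := congrArg (fun x => Nat.testBit x (j - (i+1))) hhi
    simp only [← Nat.shiftRight_eq_div_pow, Nat.testBit_shiftRight] at this
    have hji : i + 1 + (j - (i+1)) = j := by omega
    rwa [hji] at this

def psiF (p a : ℕ) : ZMod p × ZMod p := ((a % p : ℕ), (a / p : ℕ))

def clsF (p : ℕ) (d : ZMod p × ZMod p) : ZMod p := d.2 - d.1 ^ 2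

theorem psi_inj {p a b : ℕ} (hp : 0 < p) (ha : a < p ^ 2) (hb : b < p ^ 2)
    (h : psiF p a = psiF p b) : a = b := by
  unfold psiF at h
  obtain ⟨h1, h2⟩ := Prod.mk.injEq .. ▸ h
  have e1 : a % p = b % p := by
    have := congrArg ZMod.val h1
    rwa [ZMod.val_cast_of_lt (Nat.mod_lt _ hp), ZMod.val_cast_of_lt (Nat.mod_lt _ hp)] at this
  have e2 : a / p = b / p := by
    have hap : a / p < p := Nat.div_lt_of_lt_mul (by rw [← pow_two]; exact ha)
    have hbp : b / p < p := Nat.div_lt_of_lt_mul (by rw [← pow_two]; exact hb)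
    have := congrArg ZMod.val h2
    rwa [ZMod.val_cast_of_lt hap, ZMod.val_cast_of_lt hbp] at this
  calc a = p * (a / p) + a % p := (Nat.div_add_mod a p).symm
    _ = p * (b / p) + b % p := by rw [e1, e2]
    _ = b := Nat.div_add_mod b p

theorem sidon {p : ℕ} (hp : p.Prime) (hp2 : 2 < p) {c : ZMod p}
    (d1 d2 d3 d4 : ZMod p × ZMod p)
    (h1 : clsF p d1 = c) (h2 : clsF p d2 = c) (h3 : clsF p d3 = c) (h4 : clsF p d4 = c)
    (hd : d1 - d2 = d3 - d4) (hne : d1 ≠ d2) : d1 = d3 := by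
  haveI : Fact p.Prime := ⟨hp⟩
  unfold clsF at h1 h2 h3 h4
  obtain ⟨s1, t1⟩ := d1; obtain ⟨s2, t2⟩ := d2; obtain ⟨s3, t3⟩ := d3; obtain ⟨s4, t4⟩ := d4
  simp only [Prod.mk_sub_mk, Prod.mk.injEq] at hd h1 h2 h3 h4 hne ⊢
  obtain ⟨hf, hs⟩ := hd
  have ht1 : t1 = s1 ^ 2 + c := by linear_combination h1
  have ht2 : t2 = s2 ^ 2 + c := by linear_combination h2
  have ht3 : t3 = s3 ^ 2 + c := by linear_combination h3
  have ht4 : t4 = s4 ^ 2 + c := by linear_combination h4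
  subst ht1 ht2 ht3 ht4
  have hs12 : s1 ≠ s2 := by
    intro h; subst h; exact hne rfl
  have hsum : s1 + s2 = s3 + s4 := by
    have hne' : s1 - s2 ≠ 0 := sub_ne_zero.mpr hs12
    apply mul_left_cancel₀ hne'
    calc (s1 - s2) * (s1 + s2) = s1 ^ 2 - s2 ^ 2 := by ring
      _ = s3 ^ 2 - s4 ^ 2 := by linear_combination hs
      _ = (s3 - s4) * (s3 + s4) := by ring
      _ = (s1 - s2) * (s3 + s4) := by rw [hf]
  have h2ne : (2 : ZMod p) ≠ 0 := by
    have := (ZMod.natCast_eq_zero_iff 2 p).not.mpr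
      (by intro h; exact absurd (Nat.le_of_dvd (by norm_num) h) (by omega))
    simpa using this
  have hs13 : s1 = s3 := by
    have : 2 * s1 = 2 * s3 := by linear_combination hf + hsum
    exact mul_left_cancel₀ h2ne this
  refine ⟨hs13, by rw [hs13]⟩

theorem grid {p : ℕ} (hp : p.Prime) (hp2 : 2 < p) {c : ZMod p}
    (u0 u1 u2 u3 : ZMod p × ZMod p)
    (h01 : clsF p (u0 - u1) = c) (h03 : clsF p (u0 - u3) = c)
    (h21 : clsF p (u2 - u1) = c) (h23 : clsF p (u2 - u3) = c)
    (hne : u1 ≠ u3) : u0 = u2 := by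
  have hd : (u0 - u1) - (u0 - u3) = (u2 - u1) - (u2 - u3) := by ring
  have hne' : u0 - u1 ≠ u0 - u3 := fun h => hne (by
    have := sub_right_injective h; exact this)
  have := sidon hp hp2 _ _ _ _ h01 h03 h21 h23 hd hne'
  have : u0 - u1 = u2 - u1 := this
  exact sub_left_injective this

def colF (p a b : ℕ) : ℕ × ZMod p :=
  let i := Nat.log 2 (a ^^^ b)
  if a.testBit i then (i, clsF p (psiF p (a % 2 ^ i) - psiF p (b % 2 ^ i)))
  else (i, clsF p (psiF p (b % 2 ^ i) - psiF p (a % 2 ^ i)))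

theorem testBit_log {x : ℕ} (hx : x ≠ 0) : x.testBit (Nat.log 2 x) = true := by
  have h1 : 2 ^ Nat.log 2 x ≤ x := Nat.pow_log_le_self 2 hx
  have h2 : x < 2 ^ (Nat.log 2 x + 1) := Nat.lt_pow_succ_log_self (by norm_num) x
  rw [Nat.testBit_eq_decide_div_mod_eq]
  have : x / 2 ^ Nat.log 2 x = 1 := by
    apply Nat.div_eq_of_lt_le (by simpa using h1)
    rw [pow_succ] at h2; omega
  simp [this]

theorem bit_ne {a b : ℕ} (hab : a ≠ b) :
    a.testBit (Nat.log 2 (a ^^^ b)) ≠ b.testBit (Nat.log 2 (a ^^^ b)) := by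
  have hx : a ^^^ b ≠ 0 := fun h => hab (xor_eq_zero_iff.mp h)
  have := testBit_log hx
  rw [Nat.testBit_xor] at this
  intro h; rw [h] at this; simp at this

theorem colF_symm {p : ℕ} {a b : ℕ} (hab : a ≠ b) : colF p a b = colF p b a := by
  have hxc : b ^^^ a = a ^^^ b := Nat.xor_comm b a
  have hbit := bit_ne hab
  unfold colF
  simp only [hxc]
  cases h : a.testBit (Nat.log 2 (a ^^^ b)) with
  | true => have : b.testBit (Nat.log 2 (a ^^^ b)) = false := by
              cases h' : b.testBit (Nat.log 2 (a ^^^ b)) <;> simp_all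
            simp [h, this]
  | false => have : b.testBit (Nat.log 2 (a ^^^ b)) = true := by
              cases h' : b.testBit (Nat.log 2 (a ^^^ b)) <;> simp_all
             simp [h, this]

theorem colF_fst {p : ℕ} {a b : ℕ} : (colF p a b).1 = Nat.log 2 (a ^^^ b) := by
  unfold colF
  cases h : a.testBit (Nat.log 2 (a ^^^ b)) <;> simp [h]

theorem colF_cls {p : ℕ} {a b i : ℕ} {c : ZMod p} (h : colF p a b = (i, c))
    (hbit : a.testBit (Nat.log 2 (a ^^^ b)) = true) :
    clsF p (psiF p (a % 2 ^ i) - psiF p (b % 2 ^ i)) = c := by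
  have hi : Nat.log 2 (a ^^^ b) = i := by rw [← colF_fst (p := p) (a := a) (b := b), h]
  unfold colF at h
  simp only [hi] at h hbit
  rw [if_pos hbit] at h
  exact (Prod.mk.injEq .. ▸ h).2

theorem colF_edge_facts {p a b i : ℕ} {c : ZMod p} (hab : a ≠ b) (h : colF p a b = (i, c)) :
    a.testBit i ≠ b.testBit i ∧ a / 2 ^ (i+1) = b / 2 ^ (i+1) ∧
      (a.testBit i = true → clsF p (psiF p (a % 2 ^ i) - psiF p (b % 2 ^ i)) = c) ∧
      2 ^ i ≤ max a b := by
  have hi : Nat.log 2 (a ^^^ b) = i := by rw [← colF_fst (p := p) (a := a) (b := b), h]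
  have hbit := hi ▸ bit_ne hab
  refine ⟨hbit, ?_, fun hb' => colF_cls h (hi.symm ▸ hb'), ?_⟩
  · exact div_eq_of_xor_lt (hi ▸ Nat.lt_pow_succ_log_self (by norm_num) _)
  · rcases hb' : a.testBit i with _ | _
    · have : b.testBit i = true := by cases h' : b.testBit i <;> simp_all
      exact le_max_of_le_right (Nat.ge_two_pow_of_testBit this)
    · exact le_max_of_le_left (Nat.ge_two_pow_of_testBit hb')

/-- The key combinatorial lemma: no 4-cycle in a color class. -/
theorem no_c4 {p n i : ℕ} (hp : p.Prime) (hp2 : 2 < p) (hn : n ≤ p ^ 2) {c : ZMod p}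
    {a0 a1 a2 a3 : ℕ} (l0 : a0 < n) (l1 : a1 < n) (l2 : a2 < n) (l3 : a3 < n)
    (h02 : a0 ≠ a2) (h13 : a1 ≠ a3)
    (e01 : a0 ≠ a1 ∧ colF p a0 a1 = (i, c)) (e12 : a1 ≠ a2 ∧ colF p a1 a2 = (i, c))
    (e23 : a2 ≠ a3 ∧ colF p a2 a3 = (i, c)) (e30 : a3 ≠ a0 ∧ colF p a3 a0 = (i, c)) :
    False := by
  have hppos : 0 < p := hp.pos
  obtain ⟨d01, hi01, cls01, m01⟩ := colF_edge_facts e01.1 e01.2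
  obtain ⟨d12, hi12, cls12, _⟩ := colF_edge_facts e12.1 e12.2
  obtain ⟨d23, hi23, cls23, _⟩ := colF_edge_facts e23.1 e23.2
  obtain ⟨d30, hi30, cls30, _⟩ := colF_edge_facts e30.1 e30.2
  -- reversed edges
  obtain ⟨_, _, cls10, _⟩ := colF_edge_facts e01.1.symm (colF_symm e01.1.symm ▸ e01.2)
  obtain ⟨_, _, cls21, _⟩ := colF_edge_facts e12.1.symm (colF_symm e12.1.symm ▸ e12.2)
  obtain ⟨_, _, cls32, _⟩ := colF_edge_facts e23.1.symm (colF_symm e23.1.symm ▸ e23.2)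
  obtain ⟨_, _, cls03, _⟩ := colF_edge_facts e30.1.symm (colF_symm e30.1.symm ▸ e30.2)
  have hpow : 2 ^ i < p ^ 2 := lt_of_le_of_lt m01 (lt_of_lt_of_le (max_lt l0 l1) hn)
  set u0 := psiF p (a0 % 2 ^ i)
  set u1 := psiF p (a1 % 2 ^ i)
  set u2 := psiF p (a2 % 2 ^ i)
  set u3 := psiF p (a3 % 2 ^ i)
  have key : ∀ x y : ℕ, x / 2 ^ (i+1) = y / 2 ^ (i+1) → x.testBit i = y.testBit i →
      psiF p (x % 2 ^ i) = psiF p (y % 2 ^ i) → x = y := by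
    intro x y hh hb hu
    exact eq_of_parts hh hb (psi_inj hppos
      (lt_trans (Nat.mod_lt _ (Nat.two_pow_pos i)) hpow)
      (lt_trans (Nat.mod_lt _ (Nat.two_pow_pos i)) hpow) hu)
  cases ht0 : a0.testBit i with
  | true =>
    have b1 : a1.testBit i = false := by revert d01; cases a1.testBit i <;> simp [ht0]
    have b2 : a2.testBit i = true := by revert d12; cases a2.testBit i <;> simp [b1]
    have b3 : a3.testBit i = false := by revert d23; cases a3.testBit i <;> simp [b2]
    have hu13 : u1 ≠ u3 := fun h =>
      h13 (key a1 a3 (hi01.symm.trans hi30.symm) (b1.trans b3.symm) h)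
    have hu02 := grid hp hp2 u0 u1 u2 u3 (cls01 ht0) (cls03 ht0) (cls21 b2) (cls23 b2) hu13
    exact h02 (key a0 a2 (hi01.trans hi12) (ht0.trans b2.symm) hu02)
  | false =>
    have b1 : a1.testBit i = true := by revert d01; cases a1.testBit i <;> simp [ht0]
    have b2 : a2.testBit i = false := by revert d12; cases a2.testBit i <;> simp [b1]
    have b3 : a3.testBit i = true := by revert d23; cases a3.testBit i <;> simp [b2]
    have hu02 : u0 ≠ u2 := fun h =>
      h02 (key a0 a2 (hi01.trans hi12) (ht0.trans b2.symm) h)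
    have hu13 := grid hp hp2 u1 u0 u3 u2 (cls10 b1) (cls12 b1) (cls30 b3) (cls32 b3) hu02
    exact h13 (key a1 a3 (hi01.symm.trans hi30.symm) (b1.trans b3.symm) hu13)

def QG (n p : ℕ) (j : ℕ × ZMod p) : SimpleGraph (Fin n) where
  Adj u v := u.val ≠ v.val ∧ colF p u.val v.val = j
  symm := by
    constructor
    intro u v ⟨h1, h2⟩
    exact ⟨fun h => h1 h.symm, (colF_symm h1) ▸ h2⟩
  loopless := ⟨fun u h => h.1 rfl⟩

theorem QG_colorable (n p i : ℕ) (c : ZMod p) : (QG n p (i, c)).Colorable 2 :=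
  ⟨SimpleGraph.Coloring.mk (fun v => if v.val.testBit i then 0 else 1) (by
    intro u v huv
    obtain ⟨h1, h2⟩ := huv
    have hi : Nat.log 2 (u.val ^^^ v.val) = i := by
      rw [← colF_fst (p := p) (a := u.val) (b := v.val), h2]
    have := hi ▸ bit_ne h1
    cases hu : u.val.testBit i <;> cases hv : v.val.testBit i <;> simp_all)⟩

theorem QG_avoids {n p : ℕ} (hp : p.Prime) (hp2 : 2 < p) (hn : n ≤ p ^ 2) (i : ℕ) (c : ZMod p) :
    Avoids (QG n p (i, c)) cycleC4 := by
  constructor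
  intro φ
  set G := QG n p (i, c) with hG
  have adj : ∀ x y : Fin 4, cycleC4.Adj x y → G.Adj (φ x).1 (φ y).1 := by
    intro x y hxy
    exact φ.map_rel_iff.mpr hxy
  have hne : ∀ x y : Fin 4, x ≠ y → ((φ x).1 : Fin n) ≠ (φ y).1 := by
    intro x y hxy h
    exact hxy (φ.injective (Subtype.ext h))
  have h01 : cycleC4.Adj 0 1 := Or.inl rfl
  have h12 : cycleC4.Adj 1 2 := Or.inl rfl
  have h23 : cycleC4.Adj 2 3 := Or.inl rfl
  have h30 : cycleC4.Adj 3 0 := Or.inl rfl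
  have e01 := adj 0 1 h01
  have e12 := adj 1 2 h12
  have e23 := adj 2 3 h23
  have e30 := adj 3 0 h30
  exact no_c4 hp hp2 hn ((φ 0).1.isLt) ((φ 1).1.isLt) ((φ 2).1.isLt) ((φ 3).1.isLt)
    (fun h => hne 0 2 (by decide) (Fin.ext h)) (fun h => hne 1 3 (by decide) (Fin.ext h))
    e01 e12 e23 e30

def PFam (n p : ℕ) (j : Fin ((Nat.log 2 n + 1) * p)) : SimpleGraph (Fin n) :=
  QG n p (j.val / p, ((j.val % p : ℕ) : ZMod p))

theorem PFam_partition {n p : ℕ} (hp : 0 < p) :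
    ∀ e ∈ (⊤ : SimpleGraph (Fin n)).edgeSet,
      ∃! j : Fin ((Nat.log 2 n + 1) * p), e ∈ (PFam n p j).edgeSet := by
  haveI : NeZero p := ⟨hp.ne'⟩
  intro e he
  induction e using Sym2.ind with
  | _ u v =>
    rw [SimpleGraph.mem_edgeSet, SimpleGraph.top_adj] at he
    have hne : u.val ≠ v.val := fun h => he (Fin.ext h)
    set L := Nat.log 2 n + 1 with hL
    set i := (colF p u.val v.val).1 with hi
    set c := (colF p u.val v.val).2 with hc
    have hcol : colF p u.val v.val = (i, c) := rfl
    have hiL : i < L := by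
      have h1 : u.val ^^^ v.val ≠ 0 := fun h => hne (xor_eq_zero_iff.mp h)
      have hu2 : u.val < 2 ^ L := lt_trans u.isLt (Nat.lt_pow_succ_log_self (by norm_num) n)
      have hv2 : v.val < 2 ^ L := lt_trans v.isLt (Nat.lt_pow_succ_log_self (by norm_num) n)
      have h2 : u.val ^^^ v.val < 2 ^ L := Nat.xor_lt_two_pow hu2 hv2
      have h3 : 2 ^ i ≤ u.val ^^^ v.val := by
        rw [hi, colF_fst]; exact Nat.pow_log_le_self 2 h1
      exact (Nat.pow_lt_pow_iff_right one_lt_two).mp (lt_of_le_of_lt h3 h2)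
    have hcv : c.val < p := ZMod.val_lt c
    have hjlt : p * i + c.val < L * p := by
      have h4 : p * (i + 1) ≤ p * L := Nat.mul_le_mul_left p hiL
      have h5 : p * i + c.val < p * (i + 1) := by rw [Nat.mul_succ]; omega
      calc p * i + c.val < p * L := lt_of_lt_of_le h5 h4
        _ = L * p := Nat.mul_comm p L
    refine ⟨⟨p * i + c.val, hjlt⟩, ?_, ?_⟩
    · show s(u, v) ∈ (PFam n p _).edgeSet
      rw [SimpleGraph.mem_edgeSet]
      refine ⟨hne, ?_⟩
      have hdiv : (p * i + c.val) / p = i := by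
        rw [Nat.mul_add_div hp, Nat.div_eq_of_lt hcv, Nat.add_zero]
      have hmod : (p * i + c.val) % p = c.val := by
        rw [Nat.mul_add_mod, Nat.mod_eq_of_lt hcv]
      show colF p u.val v.val = ((p * i + c.val) / p, (((p * i + c.val) % p : ℕ) : ZMod p))
      rw [hdiv, hmod, ZMod.natCast_val, ZMod.cast_id]
    · rintro j' hj'
      rw [SimpleGraph.mem_edgeSet] at hj'
      obtain ⟨-, hcol'⟩ := hj'
      rw [hcol] at hcol'
      have h5 : i = j'.val / p := (Prod.mk.injEq .. ▸ hcol').1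
      have h6 : c = ((j'.val % p : ℕ) : ZMod p) := (Prod.mk.injEq .. ▸ hcol').2
      have h7 : c.val = j'.val % p := by
        rw [h6, ZMod.val_cast_of_lt (Nat.mod_lt _ hp)]
      apply Fin.ext
      show j'.val = p * i + c.val
      rw [h5, h7]
      exact (Nat.div_add_mod j'.val p).symm

theorem k_bound {n p : ℕ} (hn : 16 ≤ n)
    (hp2s : p ≤ 2 * (Nat.sqrt (n-1) + 1)) :
    (((Nat.log 2 n + 1) * p : ℕ) : ℝ) ≤ 12 * Real.sqrt n * Real.log n := by
  have h16 : (16:ℝ) ≤ (n:ℝ) := by exact_mod_cast hn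
  have hn0 : (0:ℝ) < (n:ℝ) := by linarith
  have hsq1 : (1:ℝ) ≤ Real.sqrt n := by
    rw [show (1:ℝ) = Real.sqrt 1 by simp]
    exact Real.sqrt_le_sqrt (by linarith [h16])
  have hlog1 : (1:ℝ) ≤ Real.log n := by
    have he : Real.exp 1 ≤ (n:ℝ) := by
      have := Real.exp_one_lt_d9
      linarith [h16]
    calc (1:ℝ) = Real.log (Real.exp 1) := (Real.log_exp 1).symm
      _ ≤ Real.log n := Real.log_le_log (Real.exp_pos 1) he
  have hlog2 : (Nat.log 2 n : ℝ) * Real.log 2 ≤ Real.log n := by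
    have h1 : ((2:ℝ)) ^ (Nat.log 2 n) ≤ (n:ℝ) := by
      exact_mod_cast Nat.pow_log_le_self 2 (by omega : n ≠ 0)
    have := Real.log_le_log (by positivity) h1
    rwa [Real.log_pow] at this
  have hL : ((Nat.log 2 n : ℝ) + 1) ≤ 3 * Real.log n := by
    have hl2 : (0.6931471803 : ℝ) < Real.log 2 := Real.log_two_gt_d9
    nlinarith [Nat.cast_nonneg (Nat.log 2 n) (α := ℝ)]
  have hsqn : ((Nat.sqrt (n-1) : ℝ)) ≤ Real.sqrt n := by
    have h1 : ((Nat.sqrt (n-1) : ℝ))^2 ≤ (n:ℝ) := by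
      have := Nat.sqrt_le' (n-1)
      have h2 : Nat.sqrt (n-1) ^ 2 ≤ n := le_trans this (by omega)
      exact_mod_cast h2
    calc ((Nat.sqrt (n-1) : ℝ)) = Real.sqrt (((Nat.sqrt (n-1) : ℝ))^2) :=
          (Real.sqrt_sq (by positivity)).symm
      _ ≤ Real.sqrt n := Real.sqrt_le_sqrt h1
  have hp4 : (p : ℝ) ≤ 4 * Real.sqrt n := by
    have : (p:ℝ) ≤ 2 * ((Nat.sqrt (n-1) : ℝ) + 1) := by exact_mod_cast hp2s
    nlinarith
  have hcast : (((Nat.log 2 n + 1) * p : ℕ) : ℝ) = ((Nat.log 2 n : ℝ) + 1) * (p : ℝ) := by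
    push_cast; ring
  rw [hcast]
  calc ((Nat.log 2 n : ℝ) + 1) * (p : ℝ) ≤ (3 * Real.log n) * (4 * Real.sqrt n) := by
        apply mul_le_mul hL hp4 (by positivity) (by positivity)
    _ = 12 * Real.sqrt n * Real.log n := by ring

theorem common_nbr {n : ℕ} {G : SimpleGraph (Fin n)} (hcol : G.Colorable 2)
    (hav : Avoids G cycleC4) {x y u v : Fin n} (hxy : x ≠ y) (huv : u ≠ v)
    (hxu : G.Adj x u) (hxv : G.Adj x v) (hyu : G.Adj y u) (hyv : G.Adj y v) : False := by
  obtain ⟨C⟩ := hcol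
  have key : ∀ a b c : Fin 2, a ≠ c → b ≠ c → a = b := by decide
  have hCxy : C x = C y := key _ _ _ (C.valid hxu) (C.valid hyu)
  have hCuv : C u = C v := key _ _ _ (Ne.symm (C.valid hxu)) (Ne.symm (C.valid hxv))
  have hnxy : ¬ G.Adj x y := fun h => (C.valid h) hCxy
  have hnuv : ¬ G.Adj u v := fun h => (C.valid h) hCuv
  have hxu' : x ≠ u := hxu.ne
  have hxv' : x ≠ v := hxv.ne
  have hyu' : y ≠ u := hyu.ne
  have hyv' : y ≠ v := hyv.ne
  have mx : x ∈ G.support := ⟨u, hxu⟩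
  have mu : u ∈ G.support := ⟨x, hxu.symm⟩
  have my : y ∈ G.support := ⟨u, hyu⟩
  have mv : v ∈ G.support := ⟨x, hxv.symm⟩
  have hnyx : ¬ G.Adj y x := fun h => hnxy h.symm
  have hnvu : ¬ G.Adj v u := fun h => hnuv h.symm
  have hux : G.Adj u x := hxu.symm
  have hvx : G.Adj v x := hxv.symm
  have huy : G.Adj u y := hyu.symm
  have hvy : G.Adj v y := hyv.symm
  let w : Fin 4 → ↥G.support := ![⟨x, mx⟩, ⟨u, mu⟩, ⟨y, my⟩, ⟨v, mv⟩]
  refine hav.false (⟨⟨w, ?_⟩, ?_⟩ : cycleC4 ↪g _)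
  · intro a b hab
    fin_cases a <;> fin_cases b <;>
      simp_all [w, Subtype.ext_iff] <;>
      first
        | rfl
        | (exfalso; simp_all [eq_comm])
  · intro a b
    show (G.induce G.support).Adj (w a) (w b) ↔ cycleC4.Adj a b
    have hGadj : ∀ (a b : ↥G.support), (G.induce G.support).Adj a b ↔ G.Adj a.1 b.1 := fun _ _ => Iff.rfl
    rw [hGadj]
    fin_cases a <;> fin_cases b <;>
      simp [w, cycleC4, hxu, hxv, hyu, hyv, hnxy, hnuv, hnyx, hnvu, hux, hvx, huy, hvy,
        G.irrefl] <;>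
      decide

open Finset in
theorem edge_bound {n : ℕ} (hn1 : 1 ≤ n) (G : SimpleGraph (Fin n)) [DecidableRel G.Adj]
    (h : ∀ x y : Fin n, x ≠ y → ∀ u v : Fin n, u ≠ v →
      G.Adj x u → G.Adj x v → G.Adj y u → G.Adj y v → False) :
    ((G.edgeFinset.card : ℝ)) ≤ (n : ℝ) * Real.sqrt n := by
  classical
  -- step 1 : sum of offDiag cards bounded
  have step1 : ∀ v : Fin n, (G.neighborFinset v).offDiag =
      (univ : Finset (Fin n)).offDiag.filter (fun p => G.Adj v p.1 ∧ G.Adj v p.2) := by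
    intro v
    ext p
    simp only [Finset.mem_offDiag, mem_neighborFinset, Finset.mem_filter, Finset.mem_univ,
      true_and]
    tauto
  have step2 : ∑ v : Fin n, (G.neighborFinset v).offDiag.card ≤ n * n - n := by
    have e1 : ∑ v : Fin n, (G.neighborFinset v).offDiag.card
        = ∑ p ∈ (univ : Finset (Fin n)).offDiag,
            ((univ : Finset (Fin n)).filter (fun v => G.Adj v p.1 ∧ G.Adj v p.2)).card := by
      simp only [step1, Finset.card_filter]
      rw [Finset.sum_comm]
    rw [e1]
    have e2 : ∀ p ∈ (univ : Finset (Fin n)).offDiag,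
        ((univ : Finset (Fin n)).filter (fun v => G.Adj v p.1 ∧ G.Adj v p.2)).card ≤ 1 := by
      intro p hp
      rw [Finset.mem_offDiag] at hp
      apply Finset.card_le_one.mpr
      intro a ha b hb
      simp only [Finset.mem_filter] at ha hb
      by_contra hab
      exact h a b hab p.1 p.2 hp.2.2 ha.2.1 ha.2.2 hb.2.1 hb.2.2
    calc ∑ p ∈ (univ : Finset (Fin n)).offDiag, _ ≤
        ∑ _p ∈ (univ : Finset (Fin n)).offDiag, 1 := Finset.sum_le_sum e2
      _ = (univ : Finset (Fin n)).offDiag.card := by simp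
      _ = n * n - n := by rw [Finset.offDiag_card]; simp
  -- step 3 : sum of squares of degrees
  have hsplit : ∀ m : ℕ, m * m = (m * m - m) + m := by
    intro m
    cases m with
    | zero => rfl
    | succ t =>
      have : t + 1 ≤ (t+1) * (t+1) := Nat.le_mul_of_pos_left _ (Nat.succ_pos t)
      omega
  have step3 : ∑ v : Fin n, G.degree v * G.degree v ≤ n * n - n + 2 * G.edgeFinset.card := by
    have e3 : ∑ v : Fin n, G.degree v * G.degree v
        = ∑ v : Fin n, (G.neighborFinset v).offDiag.card + ∑ v : Fin n, G.degree v := by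
      rw [← Finset.sum_add_distrib]
      apply Finset.sum_congr rfl
      intro v _
      rw [Finset.offDiag_card]
      exact hsplit _
    rw [e3, G.sum_degrees_eq_twice_card_edges]
    omega
  -- step 4 : Cauchy-Schwarz
  set m := G.edgeFinset.card with hm
  have cauchy : ((2 * m : ℕ) : ℝ)^2 ≤ (n : ℝ) * ∑ v : Fin n, ((G.degree v : ℝ))^2 := by
    have := sq_sum_le_card_mul_sum_sq (s := (univ : Finset (Fin n)))
      (f := fun v => ((G.degree v : ℝ)))
    rw [← G.sum_degrees_eq_twice_card_edges]
    push_cast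
    simpa using this
  have sumdd : ∑ v : Fin n, ((G.degree v : ℝ))^2 ≤ (n : ℝ) * n + 2 * m := by
    have c1 : ∑ v : Fin n, ((G.degree v : ℝ))^2
        = ((∑ v : Fin n, G.degree v * G.degree v : ℕ) : ℝ) := by
      push_cast; apply Finset.sum_congr rfl; intro v _; ring
    rw [c1]
    have c2 : ((∑ v : Fin n, G.degree v * G.degree v : ℕ) : ℝ)
        ≤ ((n * n - n + 2 * m : ℕ) : ℝ) := by exact_mod_cast step3
    calc ((∑ v : Fin n, G.degree v * G.degree v : ℕ) : ℝ) ≤ ((n * n - n + 2 * m : ℕ) : ℝ) := c2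
      _ ≤ (n : ℝ) * n + 2 * m := by
          have : ((n * n - n : ℕ) : ℝ) ≤ (n : ℝ) * n := by
            have : (n * n - n : ℕ) ≤ n * n := Nat.sub_le _ _
            exact_mod_cast this
          push_cast
          linarith
  have key : 4 * ((m : ℝ))^2 ≤ (n : ℝ)^3 + 2 * (m : ℝ) * n := by
    have := le_trans cauchy (by
      apply mul_le_mul_of_nonneg_left sumdd (by positivity) :
        (n : ℝ) * ∑ v : Fin n, ((G.degree v : ℝ))^2 ≤ (n:ℝ) * ((n : ℝ) * n + 2 * m))
    push_cast at this
    nlinarith [this]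
  -- step 5 : conclude
  set s := Real.sqrt n with hs
  have hs2 : s^2 = n := Real.sq_sqrt (by positivity)
  have hs1 : 1 ≤ s := by
    rw [hs, show (1:ℝ) = Real.sqrt 1 by simp]
    exact Real.sqrt_le_sqrt (by exact_mod_cast hn1)
  by_contra hcon
  push_neg at hcon
  have hm0 : (0:ℝ) ≤ (m:ℝ) := Nat.cast_nonneg _
  have hn0 : (0:ℝ) ≤ (n:ℝ) := by positivity
  have h1 : (0:ℝ) ≤ (n:ℝ) * s := mul_nonneg hn0 (le_trans zero_le_one hs1)
  have h3 : ((n:ℝ)*s)^2 = (n:ℝ)^3 := by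
    have : ((n:ℝ)*s)^2 = (n:ℝ)^2 * s^2 := by ring
    rw [this, hs2]; ring
  have h2 : ((n:ℝ))^3 < (m:ℝ)^2 := by
    rw [← h3]
    apply sq_lt_sq' _ hcon
    linarith
  have h4 : (n:ℝ) ≤ (n:ℝ)*s := by nlinarith
  have h5 : (n:ℝ) ≤ (m:ℝ) := le_trans h4 hcon.le
  have h6 : 2*(m:ℝ)*(n:ℝ) ≤ 2*(m:ℝ)*(m:ℝ) := by nlinarith
  nlinarith [key, h2, h6]

open Finset in
theorem lower_final {n : ℕ} (hn : 16 ≤ n) (k : ℕ) (P : Fin k → SimpleGraph (Fin n))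
    (hP : IsBipartitePartition n k P) (hav : ∀ i, Avoids (P i) cycleC4) :
    (1/4 : ℝ) * Real.sqrt n ≤ (k : ℝ) := by
  classical
  have hbound : ∀ i, (((P i).edgeFinset.card : ℝ)) ≤ (n : ℝ) * Real.sqrt n := by
    intro i
    exact edge_bound (by omega) (P i)
      (fun x y hxy u v huv a1 a2 a3 a4 => common_nbr (hP.1 i) (hav i) hxy huv a1 a2 a3 a4)
  have hsub : (⊤ : SimpleGraph (Fin n)).edgeFinset ⊆
      Finset.univ.biUnion (fun j => (P j).edgeFinset) := by
    intro e he
    rw [SimpleGraph.mem_edgeFinset] at he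
    obtain ⟨j, hj, -⟩ := hP.2 e he
    exact Finset.mem_biUnion.mpr ⟨j, Finset.mem_univ j, SimpleGraph.mem_edgeFinset.mpr hj⟩
  have htot : (⊤ : SimpleGraph (Fin n)).edgeFinset.card ≤ ∑ j, (P j).edgeFinset.card :=
    le_trans (Finset.card_le_card hsub) Finset.card_biUnion_le
  have hchoose : (((⊤ : SimpleGraph (Fin n)).edgeFinset.card : ℕ) : ℝ)
      = (n : ℝ) * ((n : ℝ) - 1) / 2 := by
    rw [SimpleGraph.card_edgeFinset_top_eq_card_choose_two, Nat.cast_choose_two]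
    simp
  have htotR : (n : ℝ) * ((n : ℝ) - 1) / 2 ≤ (k : ℝ) * ((n : ℝ) * Real.sqrt n) := by
    calc (n : ℝ) * ((n : ℝ) - 1) / 2
        = (((⊤ : SimpleGraph (Fin n)).edgeFinset.card : ℕ) : ℝ) := hchoose.symm
      _ ≤ ((∑ j, (P j).edgeFinset.card : ℕ) : ℝ) := by exact_mod_cast htot
      _ = ∑ j, (((P j).edgeFinset.card : ℕ) : ℝ) := by push_cast; rfl
      _ ≤ ∑ _j : Fin k, (n : ℝ) * Real.sqrt n := Finset.sum_le_sum (fun j _ => hbound j)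
      _ = (k : ℝ) * ((n : ℝ) * Real.sqrt n) := by
          rw [Finset.sum_const, Finset.card_univ, Fintype.card_fin, nsmul_eq_mul]
  set s := Real.sqrt n with hsdef
  have hs2 : s ^ 2 = (n : ℝ) := Real.sq_sqrt (by positivity)
  have hs4 : (4 : ℝ) ≤ s := by
    rw [hsdef, show (4:ℝ) = Real.sqrt 16 by
      rw [show (16:ℝ) = 4^2 by norm_num, Real.sqrt_sq (by norm_num)]]
    exact Real.sqrt_le_sqrt (by exact_mod_cast hn)
  have hk0 : (0:ℝ) ≤ (k:ℝ) := by positivity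
  by_contra hcon
  push_neg at hcon
  have hcon2 : (k : ℝ) * s < (1/4 : ℝ) * s * s :=
    mul_lt_mul_of_pos_right hcon (by linarith)
  have hn0 : (0:ℝ) < (n:ℝ) := by nlinarith [hs2, hs4]
  have hn16 : (16:ℝ) ≤ (n:ℝ) := by exact_mod_cast hn
  have hmul := mul_lt_mul_of_pos_right hcon2 hn0
  have hfin : (n:ℝ) * ((n:ℝ) - 1) / 2 < 1/4 * (n:ℝ) * (n:ℝ) := by
    calc (n:ℝ) * ((n:ℝ) - 1) / 2 ≤ (k:ℝ) * ((n:ℝ) * s) := htotR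
      _ = (k:ℝ) * s * (n:ℝ) := by ring
      _ < 1/4 * s * s * (n:ℝ) := hmul
      _ = 1/4 * (s^2) * (n:ℝ) := by ring
      _ = 1/4 * (n:ℝ) * (n:ℝ) := by rw [hs2]
  nlinarith [hfin, hn16]

theorem upper_final {n : ℕ} (hn : 16 ≤ n) :
    ∃ (k : ℕ) (P : Fin k → SimpleGraph (Fin n)),
      IsBipartitePartition n k P ∧ (∀ i, Avoids (P i) cycleC4) ∧
        (k : ℝ) ≤ 12 * Real.sqrt n * Real.log n := by
  obtain ⟨p, pp, hsp, hp2s⟩ := Nat.exists_prime_lt_and_le_two_mul (Nat.sqrt (n-1) + 1)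
    (by omega)
  have hs2 : 2 ≤ Nat.sqrt (n-1) + 1 := by
    have : 1 ≤ Nat.sqrt (n-1) := Nat.le_sqrt.mpr (by omega)
    omega
  have hp2 : 2 < p := lt_of_le_of_lt hs2 hsp
  have hnp : n ≤ p ^ 2 := by
    have h1 : n - 1 < (Nat.sqrt (n-1) + 1) ^ 2 := by
      have := Nat.lt_succ_sqrt' (n-1)
      simpa [Nat.succ_eq_add_one] using this
    have h2 : (Nat.sqrt (n-1) + 1) ^ 2 ≤ p ^ 2 := Nat.pow_le_pow_left hsp.le 2
    omega
  refine ⟨(Nat.log 2 n + 1) * p, PFam n p, ⟨?_, PFam_partition pp.pos⟩, ?_, ?_⟩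
  · intro j
    exact QG_colorable n p _ _
  · intro j
    exact QG_avoids pp hp2 hnp _ _
  · exact k_bound hn hp2s

end helpers

/-- `a·√n ≤ χ'_{C₄}(n) ≤ b·√n·log n` for large `n`. -/
theorem C4_free_partition_bounds :
    ∃ a b : ℝ, 0 < a ∧ 0 < b ∧ ∃ N : ℕ, ∀ n : ℕ, N ≤ n →
      (∀ (k : ℕ) (P : Fin k → SimpleGraph (Fin n)),
        IsBipartitePartition n k P → (∀ i, Avoids (P i) cycleC4) →
          a * Real.sqrt n ≤ (k : ℝ)) ∧
      (∃ (k : ℕ) (P : Fin k → SimpleGraph (Fin n)),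
        IsBipartitePartition n k P ∧ (∀ i, Avoids (P i) cycleC4) ∧
          (k : ℝ) ≤ b * Real.sqrt n * Real.log n) := by
  refine ⟨1/4, 12, by norm_num, by norm_num, 16, fun n hn => ⟨?_, ?_⟩⟩
  · intro k P hP hav
    exact lower_final hn k P hP hav
  · exact upper_final hn
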